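/- Let (X, B, μ, α) be an invertible ergodic measure-preserving system and f ∈ L²(X) with ∫ f dμ = 0. Suppose A is a sub-σ-algebra of B such that A_n = α^{−n}(A) is non-increasing in n, and that Σ_{n>0} ‖E(f | A_n)‖₂ < ∞ and Σ_{n<0} ‖f − E(f | A_n)‖₂ < ∞. Then the series σ² = ∫ f² dμ + 2 Σ_{j≥1} ∫ (f∘α^j) f dμ converges to a finite value. -/

import Mathlib

open MeasureTheory

section Aux

/-- A conditional expectation of an `L²` function is in `L²`, with smaller norm. -/
lemma aux_memLp_condexp {X : Type*} {m m0 : MeasurableSpace X} (hm : m ≤ m0)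
    {μ : Measure X} [IsProbabilityMeasure μ] {f : X → ℝ}
    (hf : MemLp f 2 μ) :
    MemLp (μ[f|m]) 2 μ ∧ eLpNorm (μ[f|m]) 2 μ ≤ eLpNorm f 2 μ := by
  set F := hf.toLp f with hF
  have hcoe : (F : X → ℝ) =ᵐ[μ] f := hf.coeFn_toLp
  have hG : (condExpL2 ℝ ℝ hm F : X → ℝ) =ᵐ[μ] μ[f|m] := by
    refine ae_eq_condExp_of_forall_setIntegral_eq hm (hf.integrable one_le_two)
      (fun s _ hμs => integrableOn_condExpL2_of_measure_ne_top hm hμs.ne F)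
      (fun s hs hμs => ?_) (aestronglyMeasurable_condExpL2 hm F)
    rw [integral_condExpL2_eq hm F hs hμs.ne]
    exact setIntegral_congr_ae (hm s hs) (hcoe.mono fun x hx _ => hx)
  constructor
  · exact (Lp.memLp (condExpL2 ℝ ℝ hm F : X →₂[μ] ℝ)).ae_eq hG
  · calc eLpNorm (μ[f|m]) 2 μ
        = eLpNorm (condExpL2 ℝ ℝ hm F : X → ℝ) 2 μ := (eLpNorm_congr_ae hG).symm
    _ ≤ eLpNorm (F : X → ℝ) 2 μ := eLpNorm_condExpL2_le hm F
    _ = eLpNorm f 2 μ := eLpNorm_congr_ae hcoe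

/-- Cauchy–Schwarz for integrals of products of `L²` functions. -/
lemma aux_cs {X : Type*} {m0 : MeasurableSpace X} {μ : Measure X} {u v : X → ℝ}
    (hu : MemLp u 2 μ) (hv : MemLp v 2 μ) :
    Integrable (fun x => u x * v x) μ ∧
      |∫ x, u x * v x ∂μ| ≤ (eLpNorm u 2 μ).toReal * (eLpNorm v 2 μ).toReal := by
  set U := hu.toLp u with hUdef
  set V := hv.toLp v with hVdef
  have hU : (U : X → ℝ) =ᵐ[μ] u := hu.coeFn_toLp
  have hV : (V : X → ℝ) =ᵐ[μ] v := hv.coeFn_toLp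
  have hint : Integrable (fun x => (U : X → ℝ) x * (V : X → ℝ) x) μ := by
    have h := L2.integrable_inner (𝕜 := ℝ) U V
    simpa [RCLike.inner_apply, starRingEnd_apply, mul_comm] using h
  have hint' : Integrable (fun x => u x * v x) μ := hint.congr (hU.mul hV)
  refine ⟨hint', ?_⟩
  have h1 : ∫ x, u x * v x ∂μ = (inner ℝ U V : ℝ) := by
    rw [L2.inner_def]
    refine (integral_congr_ae ?_).symm
    filter_upwards [hU, hV] with x hx hy
    simp [RCLike.inner_apply, starRingEnd_apply, hx, hy, mul_comm]
  rw [h1]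
  calc |(inner ℝ U V : ℝ)| ≤ ‖U‖ * ‖V‖ := abs_real_inner_le_norm U V
  _ = (eLpNorm u 2 μ).toReal * (eLpNorm v 2 μ).toReal := by
      rw [hUdef, hVdef, Lp.norm_toLp, Lp.norm_toLp]

lemma aux_summable_half {b : ℕ → ℝ} (hb : Summable b) (hb0 : ∀ i, 0 ≤ b i) :
    Summable (fun j => b (j / 2)) := by
  have hdouble : ∀ n : ℕ, ∑ j ∈ Finset.range (2 * n), b (j / 2)
      = 2 * ∑ i ∈ Finset.range n, b i := by
    intro n
    induction n with
    | zero => simp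
    | succ k ih =>
      have h2 : 2 * (k + 1) = 2 * k + 1 + 1 := by ring
      rw [h2, Finset.sum_range_succ, Finset.sum_range_succ, ih, Finset.sum_range_succ]
      have e1 : (2 * k) / 2 = k := by omega
      have e2 : (2 * k + 1) / 2 = k := by omega
      rw [e1, e2]; ring
  refine summable_of_sum_range_le (c := 2 * ∑' i, b i) (fun j => hb0 _) (fun n => ?_)
  calc ∑ j ∈ Finset.range n, b (j / 2)
      ≤ ∑ j ∈ Finset.range (2 * n), b (j / 2) := by
        refine Finset.sum_le_sum_of_subset_of_nonneg ?_ (fun j _ _ => hb0 _)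
        exact Finset.range_subset_range.mpr (by omega)
  _ = 2 * ∑ i ∈ Finset.range n, b i := hdouble n
  _ ≤ 2 * ∑' i, b i := by
      have := Summable.sum_le_tsum (Finset.range n) (fun i _ => hb0 i) hb
      linarith

end Aux

set_option maxHeartbeats 1000000

/-- (Gordin) For an invertible ergodic measure-preserving system and
`f ∈ L²` with zero mean, under the Gordin conditions on a non-increasing filtration
`A_n = α^{−n}(A)`, the series `σ² = ∫ f² + 2 Σ_{j≥1} ∫ (f∘α^j) f` converges
(i.e. the correlation series is summable). -/
theorem gordin_asymptotic_variance_finite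
    {X : Type*} [m0 : MeasurableSpace X]
    (μ : Measure X) [IsProbabilityMeasure μ]
    (α : X ≃ X) (hα : MeasurePreserving α μ μ) (hαsymm : MeasurePreserving α.symm μ μ)
    (herg : Ergodic α μ)
    (f : X → ℝ) (hf : MemLp f 2 μ) (hf0 : ∫ x, f x ∂μ = 0)
    (A : MeasurableSpace X) (hA : A ≤ m0)
    (An : ℤ → MeasurableSpace X)
    (hAn : ∀ n : ℤ, An n = MeasurableSpace.comap (fun x => (α ^ n : Equiv.Perm X) x) A)
    (hmono : ∀ n m : ℤ, n ≤ m → An m ≤ An n)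
    (h1 : Summable fun n : ℕ => (eLpNorm (μ[f | An ((n : ℤ) + 1)]) 2 μ).toReal)
    (h2 : Summable fun n : ℕ => (eLpNorm (f - μ[f | An (-(n : ℤ) - 1)]) 2 μ).toReal) :
    Summable fun j : ℕ => ∫ x, f ((α ^ ((j : ℤ) + 1) : Equiv.Perm X) x) * f x ∂μ := by
  classical
  -- comap composition rule
  have hcomp : ∀ n k : ℤ,
      MeasurableSpace.comap (⇑(α ^ n : Equiv.Perm X)) (An k) = An (k + n) := by
    intro n k
    rw [hAn k, hAn (k + n), MeasurableSpace.comap_comp]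
    congr 1
    funext x
    simp [← Equiv.Perm.mul_apply, ← zpow_add]
  have hA0 : An 0 ≤ m0 := by
    rw [hAn 0]
    have h0 : (fun x => ((α ^ (0 : ℤ) : Equiv.Perm X)) x) = id := by
      funext x; simp
    rw [h0, MeasurableSpace.comap_id]
    exact hA
  clear hAn hA hmono herg hf0
  clear A
  -- measure preservation of integer powers
  have hmpn : ∀ (n : ℕ) (e : X ≃ X), @MeasurePreserving X X m0 m0 (⇑e) μ μ →
      @MeasurePreserving X X m0 m0 (⇑(e ^ n : Equiv.Perm X)) μ μ := by
    intro n
    induction n with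
    | zero => intro e _; simpa using MeasurePreserving.id μ
    | succ k ih =>
      intro e he
      have hco : (⇑(e ^ (k + 1) : Equiv.Perm X)) = (⇑(e ^ k : Equiv.Perm X)) ∘ e := by
        funext x; simp [pow_succ, Equiv.Perm.mul_apply]
      rw [hco]
      exact (ih e he).comp he
  have hmp : ∀ n : ℤ, @MeasurePreserving X X m0 m0 (⇑(α ^ n : Equiv.Perm X)) μ μ := by
    intro n
    cases n with
    | ofNat k => simpa using hmpn k α hα
    | negSucc k =>
      have h : (α ^ (Int.negSucc k) : Equiv.Perm X) = ((α⁻¹ : Equiv.Perm X) ^ (k + 1)) := by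
        rw [zpow_negSucc, inv_pow]
      rw [h]
      have hinv : (α⁻¹ : Equiv.Perm X) = α.symm := rfl
      rw [hinv]
      exact hmpn (k + 1) α.symm hαsymm
  have hAle : ∀ n : ℤ, An n ≤ m0 := by
    intro n
    have h := hcomp n 0
    rw [zero_add] at h
    rw [← h]
    exact (MeasurableSpace.comap_mono hA0).trans (Measurable.comap_le (hmp n).measurable)
  have hfi : Integrable f μ := hf.integrable one_le_two
  set a : ℕ → ℝ := fun i => (eLpNorm (μ[f | An ((i : ℤ) + 1)]) 2 μ).toReal with hadef
  set b : ℕ → ℝ := fun i => (eLpNorm (f - μ[f | An (-(i : ℤ) - 1)]) 2 μ).toReal with hbdef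
  -- the key estimate
  have key : ∀ j : ℕ,
      |∫ x, f ((α ^ ((j : ℤ) + 1 + 1) : Equiv.Perm X) x) * f x ∂μ|
        ≤ (eLpNorm f 2 μ).toReal * (b (j / 2) + a ((j + 1) / 2)) := by
    intro j
    set n : ℤ := (j : ℤ) + 1 + 1 with hn
    set k : ℤ := -((j / 2 : ℕ) : ℤ) - 1 with hk
    have hkn : k + n = (((j + 1) / 2 : ℕ) : ℤ) + 1 := by push_cast; omega
    haveI : SigmaFinite (μ.trim (hAle k)) := inferInstance
    haveI : SigmaFinite (μ.trim (hAle (k + n))) := inferInstance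
    set g : X → ℝ := μ[f | An k] with hgdef
    obtain ⟨hgmem, hgnorm⟩ := aux_memLp_condexp (hAle k) hf
    set φ : X → X := ⇑(α ^ n : Equiv.Perm X) with hφdef
    have hφ : @MeasurePreserving X X m0 m0 φ μ μ := hmp n
    have hgφ : MemLp (fun x => g (φ x)) 2 μ := hgmem.comp_measurePreserving hφ
    have hfgφ : MemLp (fun x => (f - g) (φ x)) 2 μ := (hf.sub hgmem).comp_measurePreserving hφ
    obtain ⟨hEmem, hEnorm⟩ := aux_memLp_condexp (hAle (k + n)) hf
    obtain ⟨hint1, _⟩ := aux_cs hgφ hf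
    obtain ⟨hint2, hcs2⟩ := aux_cs hfgφ hf
    obtain ⟨_, hcsE⟩ := aux_cs hgφ hEmem
    -- split the integral
    have hsplit : ∫ x, f (φ x) * f x ∂μ
        = (∫ x, g (φ x) * f x ∂μ) + ∫ x, (f - g) (φ x) * f x ∂μ := by
      rw [← integral_add hint1 hint2]
      refine integral_congr_ae (Filter.Eventually.of_forall fun x => ?_)
      simp only [Pi.sub_apply]; ring
    -- pull-out for the first term
    have hsm : StronglyMeasurable[An (k + n)] (fun x => g (φ x)) := by
      rw [← hcomp n k]
      have hφm : @Measurable X X (MeasurableSpace.comap φ (An k)) (An k) φ :=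
        Measurable.of_comap_le le_rfl
      exact StronglyMeasurable.comp_measurable stronglyMeasurable_condExp hφm
    have hint1' : Integrable ((fun x => g (φ x)) * f) μ := by
      exact hint1
    have hmul : μ[(fun x => g (φ x)) * f | An (k + n)]
        =ᵐ[μ] (fun x => g (φ x)) * μ[f | An (k + n)] :=
      condExp_mul_of_stronglyMeasurable_left hsm hint1' hfi
    have hterm1 : ∫ x, g (φ x) * f x ∂μ = ∫ x, g (φ x) * (μ[f | An (k + n)]) x ∂μ := by
      have e1 : ∫ x, ((fun x => g (φ x)) * f) x ∂μ
          = ∫ x, (μ[(fun x => g (φ x)) * f | An (k + n)]) x ∂μ :=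
        (integral_condExp (hAle (k + n))).symm
      have e2 : ∫ x, (μ[(fun x => g (φ x)) * f | An (k + n)]) x ∂μ
          = ∫ x, ((fun x => g (φ x)) * μ[f | An (k + n)]) x ∂μ := integral_congr_ae hmul
      simpa [Pi.mul_apply] using e1.trans e2
    -- norms of composed functions
    have hnormgφ : eLpNorm (fun x => g (φ x)) 2 μ = eLpNorm g 2 μ :=
      eLpNorm_comp_measurePreserving hgmem.aestronglyMeasurable hφ
    have hnormfgφ : eLpNorm (fun x => (f - g) (φ x)) 2 μ = eLpNorm (f - g) 2 μ :=
      eLpNorm_comp_measurePreserving (hf.sub hgmem).aestronglyMeasurable hφ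
    have hfne : eLpNorm f 2 μ ≠ ⊤ := hf.eLpNorm_ne_top
    have hgle : (eLpNorm (fun x => g (φ x)) 2 μ).toReal ≤ (eLpNorm f 2 μ).toReal := by
      rw [hnormgφ]
      exact ENNReal.toReal_mono hfne hgnorm
    -- conclude
    have hEa : (eLpNorm (μ[f | An (k + n)]) 2 μ).toReal = a ((j + 1) / 2) := by
      rw [hkn]
    have hba : (eLpNorm (f - g) 2 μ).toReal = b (j / 2) := by
      rw [hgdef, hk]
    have hE0 : (0 : ℝ) ≤ (eLpNorm (μ[f | An (k + n)]) 2 μ).toReal := ENNReal.toReal_nonneg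
    have hbnd1 : |∫ x, g (φ x) * f x ∂μ|
        ≤ (eLpNorm f 2 μ).toReal * (eLpNorm (μ[f | An (k + n)]) 2 μ).toReal := by
      rw [hterm1]
      exact hcsE.trans (mul_le_mul_of_nonneg_right hgle hE0)
    calc |∫ x, f (φ x) * f x ∂μ|
        ≤ |∫ x, g (φ x) * f x ∂μ| + |∫ x, (f - g) (φ x) * f x ∂μ| := by
          rw [hsplit]; exact abs_add_le _ _
    _ ≤ (eLpNorm f 2 μ).toReal * (eLpNorm (μ[f | An (k + n)]) 2 μ).toReal
          + (eLpNorm (fun x => (f - g) (φ x)) 2 μ).toReal * (eLpNorm f 2 μ).toReal :=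
          add_le_add hbnd1 hcs2
    _ = (eLpNorm f 2 μ).toReal * (b (j / 2) + a ((j + 1) / 2)) := by
          rw [hEa, hnormfgφ, hba]; ring
  -- summability of the dominating series
  have ha0 : ∀ i, 0 ≤ a i := fun i => ENNReal.toReal_nonneg
  have hb0 : ∀ i, 0 ≤ b i := fun i => ENNReal.toReal_nonneg
  have hbsum : Summable (fun j : ℕ => b (j / 2)) := aux_summable_half h2 hb0
  have hasum : Summable (fun j : ℕ => a ((j + 1) / 2)) := by
    have h' : Summable (fun j : ℕ => a (j / 2)) := aux_summable_half h1 ha0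
    exact (summable_nat_add_iff 1).mpr h'
  have hdom : Summable
      (fun j : ℕ => (eLpNorm f 2 μ).toReal * (b (j / 2) + a ((j + 1) / 2))) :=
    (hbsum.add hasum).mul_left _
  -- conclude via a shift of index
  refine (summable_nat_add_iff 1).mp ?_
  refine Summable.of_norm_bounded hdom (fun j => ?_)
  have hcast : ((j + 1 : ℕ) : ℤ) + 1 = (j : ℤ) + 1 + 1 := by push_cast; ring
  rw [Real.norm_eq_abs]
  calc |∫ x, f ((α ^ (((j + 1 : ℕ) : ℤ) + 1) : Equiv.Perm X) x) * f x ∂μ|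
      = |∫ x, f ((α ^ ((j : ℤ) + 1 + 1) : Equiv.Perm X) x) * f x ∂μ| := by rw [hcast]
  _ ≤ _ := key j
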